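/- For λ in the cone Γ_m ⊂ ℝⁿ and 1 ≤ j ≤ i ≤ m, one has (S_j(λ))^{1/j} ≥ (S_i(λ))^{1/i}, where S_k(λ) = σ_k(λ)/C(n,k). -/

import Mathlib

open Finset

/-- The `k`-th elementary symmetric polynomial of a vector in `ℝⁿ`. -/
noncomputable def esym (n k : ℕ) (x : Fin n → ℝ) : ℝ :=
  ∑ t ∈ Finset.powersetCard k (Finset.univ : Finset (Fin n)), ∏ i ∈ t, x i

/-- The normalized `k`-th symmetric function `S_k = σ_k / C(n,k)`. -/
noncomputable def normEsym (n k : ℕ) (x : Fin n → ℝ) : ℝ :=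
  esym n k x / (n.choose k : ℝ)

open Polynomial

lemma esym_eq_esymm (n k : ℕ) (x : Fin n → ℝ) :
    esym n k x = (Finset.univ.val.map x).esymm k := by
  rw [Finset.esymm_map_val]; rfl

lemma esym_zero (n : ℕ) (x : Fin n → ℝ) : esym n 0 x = 1 := by simp [esym]

lemma esym_one (n : ℕ) (x : Fin n → ℝ) : esym n 1 x = ∑ i, x i := by
  simp [esym, Finset.powersetCard_one]

lemma esym_self (n : ℕ) (x : Fin n → ℝ) : esym n n x = ∏ i, x i := by
  have h := Finset.powersetCard_self (Finset.univ : Finset (Fin n))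
  rw [Finset.card_univ, Fintype.card_fin] at h
  rw [esym, h, Finset.sum_singleton]

lemma esym_of_gt (n k : ℕ) (x : Fin n → ℝ) (h : n < k) : esym n k x = 0 := by
  rw [esym, Finset.powersetCard_eq_empty.2 (by simpa using h), Finset.sum_empty]

lemma key_nat (n d j : ℕ) (hj : j ≤ d) (hdn : d ≤ n) :
    (n - j).descFactorial (n - d) * n.choose j = n.descFactorial (n - d) * d.choose j := by
  have h1 := Nat.choose_mul (n := n) (k := d) (s := j) hj
  have h2 : (n - j).choose (d - j) = (n - j).choose (n - d) := by
    rw [← Nat.choose_symm (show d - j ≤ n - j by omega)]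
    congr 1
    omega
  have h3 : n.choose (n - d) = n.choose d := Nat.choose_symm hdn
  rw [Nat.descFactorial_eq_factorial_mul_choose, Nat.descFactorial_eq_factorial_mul_choose,
    mul_assoc, mul_assoc, ← h2, mul_comm ((n-j).choose (d-j)) _, ← h1, h3]

lemma multiset_fin (d : ℕ) (t : Multiset ℝ) (h : Multiset.card t = d) :
    ∃ r : Fin d → ℝ, t = Finset.univ.val.map r := by
  subst h
  refine ⟨fun i => t.toList.get (Fin.cast (t.length_toList).symm i), ?_⟩
  have : (Finset.univ : Finset (Fin (Multiset.card t))).val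
      = ↑(List.finRange (Multiset.card t)) := rfl
  have hl : List.ofFn (fun i : Fin (Multiset.card t) =>
      t.toList.get (Fin.cast (t.length_toList).symm i)) = t.toList := by
    apply List.ext_get
    · simp
    · intro i h1 h2
      simp [List.get_ofFn]
  rw [this, Multiset.map_coe, ← List.ofFn_eq_map, hl, Multiset.coe_toList]

lemma card_roots_iterate (p : Polynomial ℝ) (e : ℕ) :
    Multiset.card p.roots ≤ Multiset.card ((Polynomial.derivative)^[e] p).roots + e := by
  induction e with
  | zero => simp
  | succ k ih =>
      refine ih.trans ?_
      rw [Function.iterate_succ_apply']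
      have := Polynomial.card_roots_le_derivative ((Polynomial.derivative)^[k] p)
      omega

lemma S_invariant (n d : ℕ) (hdn : d ≤ n) (x : Fin n → ℝ) :
    ∃ r : Fin d → ℝ, ∀ j, j ≤ d → normEsym d j r = normEsym n j x := by
  classical
  set s : Multiset ℝ := Finset.univ.val.map x with hs_def
  have hs : Multiset.card s = n := by simp [hs_def]
  set p : Polynomial ℝ := (s.map fun t => Polynomial.X - Polynomial.C t).prod with hp_def
  have hmonic : p.Monic :=
    Polynomial.monic_multiset_prod_of_monic _ _ (fun a _ => Polynomial.monic_X_sub_C a)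
  have hpdeg : p.natDegree = n := by
    rw [hp_def, Polynomial.natDegree_multiset_prod_X_sub_C_eq_card, hs]
  have hproots : p.roots = s := Polynomial.roots_multiset_prod_X_sub_C s
  set e := n - d with he
  set g := (Polynomial.derivative)^[e] p with hg_def
  have hcoeff : ∀ m : ℕ, g.coeff m = ((m + e).descFactorial e : ℝ) * p.coeff (m + e) := by
    intro m
    rw [hg_def, Polynomial.coeff_iterate_derivative, nsmul_eq_mul]
  have hgtop : g.coeff d = (n.descFactorial e : ℝ) := by
    rw [hcoeff d, show d + e = n by omega, ← hpdeg, hmonic.coeff_natDegree, mul_one]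
  have hdF : (0:ℝ) < (n.descFactorial e : ℝ) := by
    have : 0 < n.descFactorial e := by
      rw [Nat.descFactorial_eq_factorial_mul_choose]
      exact Nat.mul_pos (Nat.factorial_pos e) (Nat.choose_pos (by omega))
    exact_mod_cast this
  have hgne : g ≠ 0 := by
    intro h
    rw [h, Polynomial.coeff_zero] at hgtop
    exact absurd hgtop.symm (ne_of_gt hdF)
  have hgdeg : g.natDegree = d := by
    have h1 := Polynomial.natDegree_iterate_derivative p e
    rw [hpdeg] at h1
    rw [← hg_def] at h1
    have h2 : d ≤ g.natDegree :=
      Polynomial.le_natDegree_of_ne_zero (by rw [hgtop]; exact ne_of_gt hdF)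
    omega
  have hgcard : Multiset.card g.roots = d := by
    have h1 := card_roots_iterate p e
    rw [← hg_def] at h1
    rw [hproots, hs] at h1
    have h2 := Polynomial.card_roots' g
    omega
  have hlead : g.leadingCoeff = (n.descFactorial e : ℝ) := by
    rw [Polynomial.leadingCoeff, hgdeg, hgtop]
  obtain ⟨r, hr⟩ := multiset_fin d g.roots hgcard
  refine ⟨r, fun j hj => ?_⟩
  have hVg : g.coeff (d - j) = (n.descFactorial e : ℝ) * ((-1:ℝ)^j * g.roots.esymm j) := by
    have h := Polynomial.coeff_eq_esymm_roots_of_card (p := g)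
      (by rw [hgcard, hgdeg]) (k := d - j) (by rw [hgdeg]; omega)
    rw [hgdeg, hlead, show d - (d - j) = j by omega, mul_assoc] at h
    exact h
  have hVp : p.coeff (n - j) = (-1:ℝ)^j * s.esymm j := by
    have h := s.prod_X_sub_C_coeff (k := n - j) (by rw [hs]; omega)
    rw [hs, show n - (n - j) = j by omega, ← hp_def] at h
    exact h
  have hrel : g.coeff (d - j) = ((n - j).descFactorial e : ℝ) * p.coeff (n - j) := by
    rw [hcoeff (d - j), show d - j + e = n - j by omega]
  have E : (n.descFactorial e : ℝ) * esym d j r = ((n - j).descFactorial e : ℝ) * esym n j x := by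
    have hA : (-1:ℝ)^j * ((n.descFactorial e : ℝ) * g.roots.esymm j)
        = (-1:ℝ)^j * (((n - j).descFactorial e : ℝ) * s.esymm j) := by
      have := hVg.symm.trans (hrel.trans (by rw [hVp]))
      linear_combination this
    have hB := mul_left_cancel₀ (pow_ne_zero j (by norm_num : (-1:ℝ) ≠ 0)) hA
    rw [esym_eq_esymm, esym_eq_esymm, ← hr, ← hs_def]
    exact hB
  have hchoosen : (0:ℝ) < (n.choose j : ℝ) := by
    exact_mod_cast Nat.choose_pos (le_trans hj hdn)
  have hchoosed : (0:ℝ) < (d.choose j : ℝ) := by exact_mod_cast Nat.choose_pos hj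
  have hkR : ((n - j).descFactorial e : ℝ) * (n.choose j : ℝ)
      = (n.descFactorial e : ℝ) * (d.choose j : ℝ) := by
    exact_mod_cast congrArg (Nat.cast : ℕ → ℝ) (key_nat n d j hj hdn)
  rw [normEsym, normEsym, div_eq_div_iff (ne_of_gt hchoosed) (ne_of_gt hchoosen)]
  apply mul_left_cancel₀ (ne_of_gt hdF)
  calc (n.descFactorial e : ℝ) * (esym d j r * (n.choose j : ℝ))
      = ((n.descFactorial e : ℝ) * esym d j r) * (n.choose j : ℝ) := by ring
    _ = (((n - j).descFactorial e : ℝ) * esym n j x) * (n.choose j : ℝ) := by rw [E]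
    _ = esym n j x * (((n - j).descFactorial e : ℝ) * (n.choose j : ℝ)) := by ring
    _ = esym n j x * ((n.descFactorial e : ℝ) * (d.choose j : ℝ)) := by rw [hkR]
    _ = (n.descFactorial e : ℝ) * (esym n j x * (d.choose j : ℝ)) := by ring

lemma esym_inv_mul (d k : ℕ) (hk : k ≤ d) (r : Fin d → ℝ) (h0 : ∀ i, r i ≠ 0) :
    esym d k (fun i => (r i)⁻¹) * ∏ i, r i = esym d (d - k) r := by
  rw [esym, esym, Finset.sum_mul]
  refine Finset.sum_nbij' (i := fun t => tᶜ) (j := fun t => tᶜ) ?_ ?_ ?_ ?_ ?_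
  · intro t ht
    rw [Finset.mem_powersetCard_univ] at ht ⊢
    rw [Finset.card_compl, Fintype.card_fin, ht]
  · intro t ht
    rw [Finset.mem_powersetCard_univ] at ht ⊢
    rw [Finset.card_compl, Fintype.card_fin, ht]
    omega
  · intro t _; exact compl_compl t
  · intro t _; exact compl_compl t
  · intro t ht
    have hsplit := Finset.prod_mul_prod_compl t r
    have hone : (∏ i ∈ t, (r i)⁻¹) * ∏ i ∈ t, r i = 1 := by
      rw [← Finset.prod_mul_distrib]
      exact Finset.prod_eq_one (fun i _ => inv_mul_cancel₀ (h0 i))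
    calc (∏ i ∈ t, (r i)⁻¹) * ∏ i, r i
        = ((∏ i ∈ t, (r i)⁻¹) * ∏ i ∈ t, r i) * ∏ i ∈ tᶜ, r i := by rw [← hsplit]; ring
      _ = ∏ i ∈ tᶜ, r i := by rw [hone, one_mul]

lemma normEsym_zero (n : ℕ) (x : Fin n → ℝ) : normEsym n 0 x = 1 := by
  rw [normEsym, esym_zero]
  simp

lemma newton_two (y : Fin 2 → ℝ) : normEsym 2 0 y * normEsym 2 2 y ≤ normEsym 2 1 y ^ 2 := by
  have h1 : esym 2 1 y = y 0 + y 1 := by rw [esym_one]; exact Fin.sum_univ_two y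
  have h2 : esym 2 2 y = y 0 * y 1 := by rw [esym_self]; exact Fin.prod_univ_two y
  rw [normEsym_zero, one_mul, normEsym, normEsym, h1, h2]
  norm_num
  nlinarith [sq_nonneg (y 0 - y 1)]

lemma top_newton (d : ℕ) (hd : 2 ≤ d) (r : Fin d → ℝ) :
    normEsym d (d - 2) r * normEsym d d r ≤ normEsym d (d - 1) r ^ 2 := by
  by_cases hP : (∏ i, r i) = 0
  · have hdd : normEsym d d r = 0 := by rw [normEsym, esym_self, hP, zero_div]
    rw [hdd, mul_zero]
    exact sq_nonneg _
  · have h0 : ∀ i, r i ≠ 0 := by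
      intro i hi
      exact hP (Finset.prod_eq_zero (Finset.mem_univ i) hi)
    set y : Fin d → ℝ := fun i => (r i)⁻¹ with hy
    obtain ⟨q, hq⟩ := S_invariant d 2 hd y
    have hbottom : normEsym d 0 y * normEsym d 2 y ≤ normEsym d 1 y ^ 2 := by
      rw [← hq 0 (by norm_num), ← hq 1 (by norm_num), ← hq 2 le_rfl]
      exact newton_two q
    have htrans : ∀ k, k ≤ d → normEsym d k y * ∏ i, r i = normEsym d (d - k) r := by
      intro k hk
      rw [normEsym, normEsym, div_mul_eq_mul_div, esym_inv_mul d k hk r h0]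
      congr 1
      exact_mod_cast (congrArg (Nat.cast : ℕ → ℝ) (Nat.choose_symm hk)).symm
    have h := mul_le_mul_of_nonneg_right hbottom (sq_nonneg (∏ i, r i))
    have e1 := htrans 0 (by omega)
    have e2 := htrans 2 hd
    have e3 := htrans 1 (by omega)
    rw [Nat.sub_zero] at e1
    calc normEsym d (d-2) r * normEsym d d r
        = (normEsym d 2 y * ∏ i, r i) * (normEsym d 0 y * ∏ i, r i) := by rw [e1, e2]
      _ = (normEsym d 0 y * normEsym d 2 y) * (∏ i, r i)^2 := by ring
      _ ≤ normEsym d 1 y ^2 * (∏ i, r i)^2 := h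
      _ = (normEsym d 1 y * ∏ i, r i)^2 := by ring
      _ = normEsym d (d-1) r ^ 2 := by rw [e3]

lemma newton (n k : ℕ) (x : Fin n → ℝ) (h : k + 1 ≤ n) :
    normEsym n k x * normEsym n (k + 2) x ≤ normEsym n (k + 1) x ^ 2 := by
  by_cases h2 : k + 2 ≤ n
  · obtain ⟨r, hr⟩ := S_invariant n (k + 2) h2 x
    have ht := top_newton (k + 2) (by omega) r
    rw [show k + 2 - 2 = k from rfl, show k + 2 - 1 = k + 1 from rfl] at ht
    rw [← hr k (by omega), ← hr (k+1) (by omega), ← hr (k+2) le_rfl]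
    exact ht
  · have hz : normEsym n (k+2) x = 0 := by
      rw [normEsym, esym_of_gt n (k+2) x (by omega), zero_div]
    rw [hz, mul_zero]
    exact sq_nonneg _

lemma ratio (n m : ℕ) (x : Fin n → ℝ)
    (hΓ : ∀ j, 1 ≤ j → j ≤ m → 0 < normEsym n j x) (hmn : m ≤ n) :
    ∀ k, 1 ≤ k → k + 1 ≤ m →
      normEsym n (k+1) x ^ k ≤ normEsym n k x ^ (k+1) := by
  intro k
  induction k with
  | zero => omega
  | succ k ih =>
      intro _ hk1
      by_cases hk0 : k = 0
      · subst hk0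
        have hN := newton n 0 x (by omega)
        rw [normEsym_zero, one_mul] at hN
        simpa using hN
      · have hk : 1 ≤ k := by omega
        have ihk := ih hk (by omega)
        have hN := newton n k x (by omega)
        have p2 : 0 < normEsym n (k+1) x := hΓ (k+1) (by omega) (by omega)
        have p3 : 0 < normEsym n (k+2) x := hΓ (k+2) (by omega) (by omega)
        have hNp : (normEsym n k x * normEsym n (k+2) x)^(k+1)
            ≤ (normEsym n (k+1) x ^2)^(k+1) := by
          apply pow_le_pow_left₀ _ hN
          have p1 : 0 < normEsym n k x := hΓ k hk (by omega)
          positivity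
        have h1 : normEsym n (k+2) x ^(k+1) * normEsym n (k+1) x ^ k
            ≤ normEsym n (k+1) x ^(k+1+1) * normEsym n (k+1) x ^ k := by
          calc normEsym n (k+2) x ^(k+1) * normEsym n (k+1) x ^ k
              ≤ normEsym n (k+2) x ^(k+1) * normEsym n k x ^(k+1) := by
                apply mul_le_mul_of_nonneg_left ihk (pow_nonneg p3.le _)
            _ = (normEsym n k x * normEsym n (k+2) x)^(k+1) := by ring
            _ ≤ (normEsym n (k+1) x ^2)^(k+1) := hNp
            _ = normEsym n (k+1) x ^(k+1+1) * normEsym n (k+1) x ^ k := by ring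
        have hpos : 0 < normEsym n (k+1) x ^ k := pow_pos p2 k
        exact le_of_mul_le_mul_right h1 hpos

lemma consecutive (n m : ℕ) (x : Fin n → ℝ)
    (hΓ : ∀ j, 1 ≤ j → j ≤ m → 0 < normEsym n j x) (hmn : m ≤ n)
    (k : ℕ) (hk : 1 ≤ k) (hk1 : k + 1 ≤ m) :
    normEsym n (k+1) x ^ ((1:ℝ)/(k+1)) ≤ normEsym n k x ^ ((1:ℝ)/k) := by
  have hb : 0 < normEsym n k x := hΓ k hk (by omega)
  have ha : 0 < normEsym n (k+1) x := hΓ (k+1) (by omega) hk1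
  have h := ratio n m x hΓ hmn k hk hk1
  have hkR : (0:ℝ) < (k:ℝ) := by exact_mod_cast hk
  rw [← Real.log_le_log_iff (Real.rpow_pos_of_pos ha _) (Real.rpow_pos_of_pos hb _),
    Real.log_rpow ha, Real.log_rpow hb]
  have hlog : (k:ℝ) * Real.log (normEsym n (k+1) x)
      ≤ ((k:ℝ)+1) * Real.log (normEsym n k x) := by
    have := Real.log_le_log (pow_pos ha k) h
    rw [Real.log_pow, Real.log_pow] at this
    push_cast at this
    exact_mod_cast this
  rw [one_div, one_div, inv_mul_eq_div, inv_mul_eq_div, div_le_div_iff₀ (by linarith) hkR]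
  nlinarith [hlog]

/-- Maclaurin's inequality: for `λ ∈ Γ_m` (i.e. `S_1(λ) > 0, …, S_m(λ) > 0`) and
`1 ≤ j ≤ i ≤ m` one has `S_j(λ)^{1/j} ≥ S_i(λ)^{1/i}`. -/
theorem maclaurin_inequality (n m : ℕ) (x : Fin n → ℝ)
    (hΓ : ∀ j, 1 ≤ j → j ≤ m → 0 < normEsym n j x)
    (j i : ℕ) (hj : 1 ≤ j) (hji : j ≤ i) (him : i ≤ m) :
    (normEsym n i x) ^ ((1 : ℝ) / i) ≤ (normEsym n j x) ^ ((1 : ℝ) / j) := by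
  have hmn : m ≤ n := by
    by_contra hnm
    have h := hΓ (n+1) (by omega) (by omega)
    rw [normEsym, esym_of_gt n (n+1) x (by omega), zero_div] at h
    exact lt_irrefl _ h
  induction i, hji using Nat.le_induction with
  | base => exact le_rfl
  | succ i hji ih =>
      have h1 := ih (by omega)
      have h2 := consecutive n m x hΓ hmn i (by omega) (by omega)
      push_cast at h2 ⊢
      exact le_trans h2 h1
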